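/- Let G be a finite p-group of nilpotence class l ≥ 2 and order p^n. Then the l-th term G^l of the lower central series has exponent dividing p^{⌊n/(l+1)⌋}. -/

import Mathlib

namespace Stmt10Aux

variable {G : Type*} [Group G]

open scoped commutatorElement

lemma comm_mem {j : ℕ} {y : G} (hy : y ∈ (⊤ : Subgroup G).lowerCentralSeries j) (b : G) :
    ⁅y, b⁆ ∈ (⊤ : Subgroup G).lowerCentralSeries (j + 1) := by
  rw [Subgroup.lowerCentralSeries_succ]
  exact Subgroup.commutator_mem_commutator hy (Subgroup.mem_top b)

lemma comm_mem' {j : ℕ} {y : G} (hy : y ∈ (⊤ : Subgroup G).lowerCentralSeries j) (b : G) :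
    ⁅b, y⁆ ∈ (⊤ : Subgroup G).lowerCentralSeries (j + 1) := by
  have := comm_mem hy b
  rw [← commutatorElement_inv] at this
  exact (Subgroup.inv_mem_iff _).mp this

lemma mem_zeroth (y : G) : y ∈ (⊤ : Subgroup G).lowerCentralSeries 0 := by
  rw [Subgroup.lowerCentralSeries_zero]; trivial

lemma mem_bot_of {l j : ℕ} (hbot : (⊤ : Subgroup G).lowerCentralSeries l = ⊥) (hj : l ≤ j) {z : G}
    (hz : z ∈ (⊤ : Subgroup G).lowerCentralSeries j) : z = 1 := by
  have : z ∈ (⊤ : Subgroup G).lowerCentralSeries l := (Subgroup.lowerCentralSeries_antitone ⊤) hj hz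
  rw [hbot] at this
  exact Subgroup.mem_bot.mp this

lemma central_of {l j : ℕ} (hbot : (⊤ : Subgroup G).lowerCentralSeries l = ⊥) (hj : l ≤ j + 1) {z : G}
    (hz : z ∈ (⊤ : Subgroup G).lowerCentralSeries j) : z ∈ Subgroup.center G := by
  rw [Subgroup.mem_center_iff]
  intro g
  have h1 : ⁅z, g⁆ = 1 := mem_bot_of hbot hj (comm_mem hz g)
  exact (commutatorElement_eq_one_iff_commute.mp h1).symm.eq

/-- iterated commutator: `itcomm [b₁, …, bₖ] y = ⁅…⁅⁅y,b₁⁆,b₂⁆…,bₖ⁆` -/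
def itcomm : List G → G → G
  | [], y => y
  | b :: bs, y => itcomm bs ⁅y, b⁆

@[simp] lemma itcomm_nil (y : G) : itcomm [] y = y := rfl
@[simp] lemma itcomm_cons (b : G) (bs : List G) (y : G) :
    itcomm (b :: bs) y = itcomm bs ⁅y, b⁆ := rfl

lemma itcomm_one : ∀ bs : List G, itcomm bs (1 : G) = 1
  | [] => rfl
  | b :: bs => by simp [itcomm_one bs]

lemma itcomm_mem : ∀ (bs : List G) (j : ℕ) (y : G), y ∈ (⊤ : Subgroup G).lowerCentralSeries j →
    itcomm bs y ∈ (⊤ : Subgroup G).lowerCentralSeries (j + bs.length)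
  | [], j, y, hy => by simpa using hy
  | b :: bs, j, y, hy => by
    have := itcomm_mem bs (j + 1) ⁅y, b⁆ (comm_mem hy b)
    simpa [Nat.add_assoc, Nat.add_comm 1 bs.length] using this

lemma comm_split (y z c : G) : ⁅y * z, c⁆ = ⁅y, ⁅z, c⁆⁆ * (⁅z, c⁆ * ⁅y, c⁆) := by
  simp only [commutatorElement_def]
  group

lemma itcomm_mul {l : ℕ} (hbot : (⊤ : Subgroup G).lowerCentralSeries l = ⊥) :
    ∀ (bs : List G) (j : ℕ), l ≤ j + bs.length + 1 → ∀ y z : G,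
      y ∈ (⊤ : Subgroup G).lowerCentralSeries j → z ∈ (⊤ : Subgroup G).lowerCentralSeries j →
      itcomm bs (y * z) = itcomm bs y * itcomm bs z
  | [], j, _, y, z, _, _ => rfl
  | b :: bs, j, hc, y, z, hy, hz => by
    have hcond : l ≤ (j + 1) + bs.length + 1 := by
      simpa [Nat.add_assoc, Nat.add_comm 1 bs.length] using hc
    have hw : ⁅z, b⁆ ∈ (⊤ : Subgroup G).lowerCentralSeries (j + 1) := comm_mem hz b
    have hyb : ⁅y, b⁆ ∈ (⊤ : Subgroup G).lowerCentralSeries (j + 1) := comm_mem hy b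
    have hε : ⁅y, ⁅z, b⁆⁆ ∈ (⊤ : Subgroup G).lowerCentralSeries (j + 2) := comm_mem' hw y
    have hε' : ⁅y, ⁅z, b⁆⁆ ∈ (⊤ : Subgroup G).lowerCentralSeries (j + 1) :=
      (Subgroup.lowerCentralSeries_antitone ⊤) (by omega) hε
    rw [itcomm_cons, comm_split y z b]
    rw [itcomm_mul hbot bs (j+1) hcond _ _ hε' (mul_mem hw hyb),
        itcomm_mul hbot bs (j+1) hcond _ _ hw hyb]
    have hεz : itcomm bs ⁅y, ⁅z, b⁆⁆ = 1 :=
      mem_bot_of hbot (by omega) (itcomm_mem bs (j + 2) _ hε)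
    rw [hεz, one_mul]
    have h1 : itcomm bs ⁅z, b⁆ ∈ Subgroup.center G :=
      central_of hbot (by omega) (itcomm_mem bs (j+1) _ hw)
    rw [itcomm_cons, itcomm_cons]
    exact (Subgroup.mem_center_iff.mp h1 _).symm

lemma itcomm_inv {l : ℕ} (hbot : (⊤ : Subgroup G).lowerCentralSeries l = ⊥) (bs : List G) (j : ℕ)
    (hc : l ≤ j + bs.length + 1) {y : G} (hy : y ∈ (⊤ : Subgroup G).lowerCentralSeries j) :
    itcomm bs y⁻¹ = (itcomm bs y)⁻¹ := by
  have h := itcomm_mul hbot bs j hc y⁻¹ y ((Subgroup.inv_mem_iff _).mpr hy) hy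
  rw [inv_mul_cancel, itcomm_one] at h
  exact eq_inv_of_mul_eq_one_left h.symm

/-- Lemma A: exponent condition passes down the lower central series. -/
lemma stepA {i m : ℕ}
    (h : ∀ x ∈ (⊤ : Subgroup G).lowerCentralSeries i, x ^ m ∈ (⊤ : Subgroup G).lowerCentralSeries (i + 1)) :
    ∀ y ∈ (⊤ : Subgroup G).lowerCentralSeries (i + 1), y ^ m ∈ (⊤ : Subgroup G).lowerCentralSeries (i + 2) := by
  set N : Subgroup G := (⊤ : Subgroup G).lowerCentralSeries (i + 2) with hN
  letI : N.Normal := Subgroup.lowerCentralSeries_normal ⊤ (i + 2)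
  let π : G →* G ⧸ N := QuotientGroup.mk' N
  have hker : ∀ z : G, π z = 1 ↔ z ∈ N := fun z => QuotientGroup.eq_one_iff z
  have central1 : ∀ z ∈ (⊤ : Subgroup G).lowerCentralSeries (i + 1), π z ∈ Subgroup.center (G ⧸ N) := by
    intro z hz
    rw [Subgroup.mem_center_iff]
    intro q
    obtain ⟨g, rfl⟩ := QuotientGroup.mk'_surjective N q
    have h1 : π ⁅z, g⁆ = 1 := (hker _).mpr (comm_mem hz g)
    rw [map_commutatorElement] at h1
    exact (commutatorElement_eq_one_iff_commute.mp h1).symm.eq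
  have powcomm : ∀ x ∈ (⊤ : Subgroup G).lowerCentralSeries i, ∀ g : G, ∀ k : ℕ,
      ⁅(π x) ^ k, π g⁆ = ⁅π x, π g⁆ ^ k := by
    intro x hx g k
    induction k with
    | zero => simp
    | succ k ih =>
      have hcentral : ⁅(π x) ^ k, π g⁆ ∈ Subgroup.center (G ⧸ N) := by
        have h2 : (π x) ^ k = π (x ^ k) := (map_pow π x k).symm
        rw [h2, ← map_commutatorElement]
        exact central1 _ (comm_mem (pow_mem hx k) g)
      have key : ⁅(π x) ^ (k+1), π g⁆ =
          (π x) * ⁅(π x) ^ k, π g⁆ * (π x)⁻¹ * ⁅π x, π g⁆ := by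
        rw [pow_succ']
        simp only [commutatorElement_def]
        group
      rw [key]
      have h3 : (π x) * ⁅(π x) ^ k, π g⁆ * (π x)⁻¹ = ⁅(π x) ^ k, π g⁆ := by
        rw [Subgroup.mem_center_iff.mp hcentral (π x)]
        group
      rw [h3, ih, ← pow_succ]
  have gen : ∀ x ∈ (⊤ : Subgroup G).lowerCentralSeries i, ∀ g : G, ⁅x, g⁆ ^ m ∈ N := by
    intro x hx g
    rw [← hker, map_pow, map_commutatorElement, ← powcomm x hx g m, ← map_pow]
    have hc : π (x ^ m) ∈ Subgroup.center (G ⧸ N) := central1 _ (h x hx)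
    exact commutatorElement_eq_one_iff_commute.mpr
      ((Subgroup.mem_center_iff.mp hc (π g)).symm)
  let K : Subgroup G :=
    { carrier := {y | y ∈ (⊤ : Subgroup G).lowerCentralSeries (i + 1) ∧ y ^ m ∈ N}
      one_mem' := ⟨one_mem _, by simpa using one_mem N⟩
      mul_mem' := by
        rintro y z ⟨hy1, hy2⟩ ⟨hz1, hz2⟩
        refine ⟨mul_mem hy1 hz1, ?_⟩
        rw [← hker, map_pow, map_mul]
        have hcomm : Commute (π y) (π z) :=
          (Subgroup.mem_center_iff.mp (central1 y hy1) (π z)).symm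
        rw [hcomm.mul_pow, ← map_pow, ← map_pow, (hker _).mpr hy2, (hker _).mpr hz2, one_mul]
      inv_mem' := by
        rintro y ⟨hy1, hy2⟩
        exact ⟨inv_mem hy1, by rw [inv_pow]; exact inv_mem hy2⟩ }
  have hle : (⊤ : Subgroup G).lowerCentralSeries (i + 1) ≤ K := by
    rw [Subgroup.lowerCentralSeries_succ, Subgroup.commutator_def, Subgroup.closure_le]
    rintro x ⟨q, hq, g, -, rfl⟩
    exact ⟨comm_mem hq g, gen q hq g⟩
  intro y hy
  exact (hle hy).2

/-- extraction of a long commutator of big order -/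
lemma extract {l m : ℕ} (hbot : (⊤ : Subgroup G).lowerCentralSeries l = ⊥)
    (h0 : ∃ u ∈ (⊤ : Subgroup G).lowerCentralSeries (l - 1), u ^ m ≠ 1) :
    ∀ j, j ≤ l - 1 → ∃ (bs : List G) (x : G), bs.length = j ∧
      x ∈ (⊤ : Subgroup G).lowerCentralSeries (l - 1 - j) ∧ (itcomm bs x) ^ m ≠ 1 := by
  intro j
  induction j with
  | zero =>
    intro _
    obtain ⟨u, hu, hum⟩ := h0
    exact ⟨[], u, rfl, by simpa using hu, hum⟩
  | succ j ih =>
    intro hj1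
    obtain ⟨bs, x, hlen, hx, hxm⟩ := ih (by omega)
    by_contra hcon
    push_neg at hcon
    have hgen : ∀ x' ∈ (⊤ : Subgroup G).lowerCentralSeries (l - 1 - (j+1)), ∀ b : G,
        (itcomm bs ⁅x', b⁆) ^ m = 1 := by
      intro x' hx' b
      exact hcon (b :: bs) x' (by simp [hlen]) hx'
    have hcond : l ≤ (l - 1 - j) + bs.length + 1 := by omega
    let K : Subgroup G :=
      { carrier := {y | y ∈ (⊤ : Subgroup G).lowerCentralSeries (l - 1 - j) ∧ (itcomm bs y) ^ m = 1}
        one_mem' := ⟨one_mem _, by simp [itcomm_one]⟩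
        mul_mem' := by
          rintro y z ⟨hy1, hy2⟩ ⟨hz1, hz2⟩
          refine ⟨mul_mem hy1 hz1, ?_⟩
          rw [itcomm_mul hbot bs _ hcond y z hy1 hz1]
          have hyc : itcomm bs y ∈ Subgroup.center G :=
            central_of hbot (by omega) (itcomm_mem bs _ y hy1)
          have hcomm : Commute (itcomm bs y) (itcomm bs z) :=
            (Subgroup.mem_center_iff.mp hyc _).symm
          rw [hcomm.mul_pow, hy2, hz2, one_mul]
        inv_mem' := by
          rintro y ⟨hy1, hy2⟩
          refine ⟨inv_mem hy1, ?_⟩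
          rw [itcomm_inv hbot bs _ hcond hy1, inv_pow, hy2, inv_one] }
    have hle : (⊤ : Subgroup G).lowerCentralSeries (l - 1 - j) ≤ K := by
      have hrw : (⊤ : Subgroup G).lowerCentralSeries (l - 1 - j)
          = (⊤ : Subgroup G).lowerCentralSeries ((l - 1 - (j+1)) + 1) := by
        congr 1; omega
      rw [hrw, Subgroup.lowerCentralSeries_succ, Subgroup.commutator_def, Subgroup.closure_le]
      rintro y ⟨q, hq, g, -, rfl⟩
      refine ⟨?_, hgen q hq g⟩
      rw [hrw]
      exact comm_mem hq g
    exact hxm (hle hx).2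

end Stmt10Aux

open scoped commutatorElement in
open Stmt10Aux in
theorem stmt10 {G : Type*} [Group G] [Finite G] {p n l : ℕ} (hp : p.Prime)
    (hG : Nat.card G = p ^ n) (hl : 2 ≤ l)
    (hcl : (⊤ : Subgroup G).lowerCentralSeries l = ⊥) (hcl' : (⊤ : Subgroup G).lowerCentralSeries (l - 1) ≠ ⊥) :
    Monoid.exponent ((⊤ : Subgroup G).lowerCentralSeries (l - 1)) ∣ p ^ (n / (l + 1)) := by
  classical
  set L : Subgroup G := (⊤ : Subgroup G).lowerCentralSeries (l - 1) with hL
  have hcard : Nat.card ↥L ∣ p ^ n := hG ▸ Subgroup.card_subgroup_dvd_card L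
  have hexp : Monoid.exponent ↥L ∣ p ^ n :=
    dvd_trans Group.exponent_dvd_nat_card hcard
  obtain ⟨e, he_le, hE⟩ := (Nat.dvd_prime_pow hp).mp hexp
  rw [hE]
  rcases Nat.eq_zero_or_pos e with he0 | he1
  · simp [he0]
  suffices hkey : e * (l + 1) ≤ n by
    apply pow_dvd_pow
    rw [Nat.le_div_iff_mul_le (by omega)]
    exact hkey
  set m := p ^ (e - 1) with hm
  -- the power-m condition fails at every level up to l-1
  have hPred : ∀ i, i ≤ l - 1 →
      ¬ (∀ x ∈ (⊤ : Subgroup G).lowerCentralSeries i, x ^ m ∈ (⊤ : Subgroup G).lowerCentralSeries (i+1)) := by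
    intro i hi hPi
    have hprop : ∀ k, i ≤ k →
        (∀ x ∈ (⊤ : Subgroup G).lowerCentralSeries k, x ^ m ∈ (⊤ : Subgroup G).lowerCentralSeries (k+1)) := by
      intro k hk
      induction k, hk using Nat.le_induction with
      | base => exact hPi
      | succ k hk ih => exact stepA ih
    have hl' := hprop (l-1) hi
    have hdvd : Monoid.exponent ↥L ∣ m := by
      apply Monoid.exponent_dvd_of_forall_pow_eq_one
      rintro ⟨y, hy⟩
      have h2 : y ^ m ∈ (⊤ : Subgroup G).lowerCentralSeries (l - 1 + 1) := hl' y hy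
      rw [show l - 1 + 1 = l from by omega, hcl] at h2
      apply Subtype.ext
      simpa using Subgroup.mem_bot.mp h2
    rw [hE, hm] at hdvd
    have := (Nat.pow_dvd_pow_iff_le_right hp.one_lt).mp hdvd
    omega
  -- Step 2: the lower part of the series is big
  have hD : ∀ j, j ≤ l - 2 →
      p ^ (e * (j+1)) ∣ Nat.card ((⊤ : Subgroup G).lowerCentralSeries (l - 1 - j)) := by
    intro j
    induction j with
    | zero =>
      intro _
      simpa [mul_one] using (hE ▸ Group.exponent_dvd_nat_card :
        p ^ e ∣ Nat.card ↥L)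
    | succ j ih =>
      intro hj1
      have ihd := ih (by omega)
      set i := l - 1 - (j+1) with hidef
      have hi1 : i + 1 = l - 1 - j := by omega
      set Hi := (⊤ : Subgroup G).lowerCentralSeries i with hHi
      set Hs := (⊤ : Subgroup G).lowerCentralSeries (i+1) with hHs
      obtain ⟨x, hx, hxm⟩ : ∃ x ∈ Hi, x ^ m ∉ Hs := by
        have h4 := hPred i (by omega)
        push_neg at h4
        exact h4
      set H : Subgroup ↥Hi := Hs.subgroupOf Hi with hH
      set q : ↥Hi ⧸ H := QuotientGroup.mk' H ⟨x, hx⟩ with hq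
      have hqm : q ^ m ≠ 1 := by
        intro hq1
        apply hxm
        rw [hq, ← map_pow] at hq1
        have h5 := (QuotientGroup.eq_one_iff _).mp hq1
        rw [Subgroup.mem_subgroupOf] at h5
        simpa using h5
      have hqcard : orderOf q ∣ p ^ n := by
        refine (orderOf_dvd_natCard q).trans ?_
        have h3 : H.index ∣ Nat.card ↥Hi :=
          Dvd.intro_left _ (Subgroup.card_mul_index H)
        have h4 : Nat.card ↥Hi ∣ p ^ n := hG ▸ Subgroup.card_subgroup_dvd_card Hi
        exact dvd_trans h3 h4
      obtain ⟨k, -, hk⟩ := (Nat.dvd_prime_pow hp).mp hqcard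
      have hek : e ≤ k := by
        by_contra hlt
        exact hqm (orderOf_dvd_iff_pow_eq_one.mp (hk ▸ pow_dvd_pow p (by omega)))
      have hidx : p ^ e ∣ H.index := by
        refine (hk ▸ pow_dvd_pow p hek : p ^ e ∣ orderOf q).trans ?_
        exact orderOf_dvd_natCard q
      have hcc : Nat.card ↥H = Nat.card ↥Hs :=
        Nat.card_congr (Subgroup.subgroupOfEquivOfLe
          ((Subgroup.lowerCentralSeries_antitone ⊤) (Nat.le_succ i))).toEquiv
      have hcards : Nat.card ↥Hs * H.index = Nat.card ↥Hi := by
        rw [← hcc]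
        exact Subgroup.card_mul_index H
      have ihd' : p ^ (e * (j+1)) ∣ Nat.card ↥Hs := by
        rw [hHs, hi1]; exact ihd
      have : p ^ (e * (j+1)) * p ^ e ∣ Nat.card ↥Hs * H.index :=
        mul_dvd_mul ihd' hidx
      rw [hcards, ← pow_add] at this
      have harith : e * (j + 1) + e = e * (j + 1 + 1) := by ring
      rwa [harith] at this
  -- Step 3: the top quotient has order divisible by p^(2e)
  obtain ⟨bs, a, hlen, -, hane⟩ :=
    extract hcl (by
      have h4 := hPred (l-1) le_rfl
      push_neg at h4
      obtain ⟨u, hu, hum⟩ := h4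
      exact ⟨u, hu, fun h1 => hum (by rw [h1]; exact one_mem _)⟩) (l-1) le_rfl
  obtain ⟨b, bs₀, rfl⟩ : ∃ b bs₀, bs = b :: bs₀ := by
    cases bs with
    | nil => simp at hlen; omega
    | cons b bs₀ => exact ⟨b, bs₀, rfl⟩
  have hlen₀ : bs₀.length = l - 2 := by
    simp at hlen; omega
  set w : G := itcomm bs₀ ⁅a, b⁆ with hw
  have hwm : w ^ m ≠ 1 := hane
  have hcond1 : l ≤ 1 + bs₀.length + 1 := by omega
  have hbig : ∀ z : G, z ∈ (⊤ : Subgroup G).lowerCentralSeries 2 → itcomm bs₀ z = 1 := fun z hz =>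
    mem_bot_of hcl (by omega) (itcomm_mem bs₀ 2 z hz)
  have hcentral : ∀ z : G, z ∈ (⊤ : Subgroup G).lowerCentralSeries 1 →
      itcomm bs₀ z ∈ Subgroup.center G := fun z hz =>
    central_of hcl (by omega) (itcomm_mem bs₀ 1 z hz)
  have hmul1 : ∀ y z : G, y ∈ (⊤ : Subgroup G).lowerCentralSeries 1 → z ∈ (⊤ : Subgroup G).lowerCentralSeries 1 →
      itcomm bs₀ (y * z) = itcomm bs₀ y * itcomm bs₀ z := fun y z hy hz =>
    itcomm_mul hcl bs₀ 1 hcond1 y z hy hz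
  have hc1 : ∀ u v : G, ⁅u, v⁆ ∈ (⊤ : Subgroup G).lowerCentralSeries 1 := fun u v =>
    comm_mem (mem_zeroth u) v
  let f : G →* G :=
    { toFun := fun u => itcomm bs₀ ⁅u, b⁆
      map_one' := by simp [itcomm_one]
      map_mul' := by
        intro u v
        show itcomm bs₀ ⁅u * v, b⁆ = itcomm bs₀ ⁅u, b⁆ * itcomm bs₀ ⁅v, b⁆
        rw [comm_split u v b]
        rw [hmul1 _ _ ((Subgroup.lowerCentralSeries_antitone ⊤) one_le_two (comm_mem' (hc1 v b) u))
            (mul_mem (hc1 v b) (hc1 u b)),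
          hmul1 _ _ (hc1 v b) (hc1 u b),
          hbig _ (comm_mem' (hc1 v b) u), one_mul]
        exact (Subgroup.mem_center_iff.mp (hcentral _ (hc1 v b)) _).symm }
  let h : G →* G :=
    { toFun := fun u => itcomm bs₀ ⁅a, u⁆
      map_one' := by simp [itcomm_one]
      map_mul' := by
        intro u v
        show itcomm bs₀ ⁅a, u * v⁆ = itcomm bs₀ ⁅a, u⁆ * itcomm bs₀ ⁅a, v⁆
        have hsplit : ⁅a, u * v⁆ = ⁅a, u⁆ * (⁅u, ⁅a, v⁆⁆ * ⁅a, v⁆) := by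
          simp only [commutatorElement_def]
          group
        rw [hsplit]
        rw [hmul1 _ _ (hc1 a u)
            (mul_mem ((Subgroup.lowerCentralSeries_antitone ⊤) one_le_two (comm_mem' (hc1 a v) u))
              (hc1 a v)),
          hmul1 _ _ ((Subgroup.lowerCentralSeries_antitone ⊤) one_le_two (comm_mem' (hc1 a v) u))
            (hc1 a v),
          hbig _ (comm_mem' (hc1 a v) u), one_mul] }
  have hfa : f a = w := rfl
  have hfb : f b = 1 := by
    show itcomm bs₀ ⁅b, b⁆ = 1
    rw [commutatorElement_self, itcomm_one]
  have hha : h a = 1 := by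
    show itcomm bs₀ ⁅a, a⁆ = 1
    rw [commutatorElement_self, itcomm_one]
  have hhb : h b = w := rfl
  let Φ : G →* G × G := f.prod h
  have hLker : (⊤ : Subgroup G).lowerCentralSeries 1 ≤ Φ.ker := by
    intro u hu
    rw [MonoidHom.mem_ker, MonoidHom.prod_apply, Prod.mk_eq_one]
    constructor
    · exact hbig _ (comm_mem hu b)
    · exact hbig _ (comm_mem' hu a)
  have hR : (Subgroup.zpowers w).prod (Subgroup.zpowers w) ≤ Φ.range := by
    rintro ⟨z1, z2⟩ hz
    rw [Subgroup.mem_prod] at hz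
    obtain ⟨hz1, hz2⟩ := hz
    obtain ⟨i, hi⟩ := Subgroup.mem_zpowers_iff.mp hz1
    obtain ⟨j, hj⟩ := Subgroup.mem_zpowers_iff.mp hz2
    refine ⟨a ^ i * b ^ j, ?_⟩
    have hΦ : Φ (a ^ i * b ^ j) = (f (a ^ i * b ^ j), h (a ^ i * b ^ j)) := rfl
    rw [hΦ, map_mul, map_mul, map_zpow, map_zpow, map_zpow, map_zpow,
        hfa, hfb, hha, hhb, one_zpow, mul_one, one_zpow, one_mul, hi, hj]
  have hwcard : orderOf w ∣ p ^ n := hG ▸ orderOf_dvd_natCard w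
  obtain ⟨k, -, hk⟩ := (Nat.dvd_prime_pow hp).mp hwcard
  have hek : e ≤ k := by
    by_contra hlt
    exact hwm (orderOf_dvd_iff_pow_eq_one.mp (hk ▸ pow_dvd_pow p (by omega)))
  have hew : p ^ e ∣ orderOf w := hk ▸ pow_dvd_pow p hek
  have hcardprod : Nat.card ↥((Subgroup.zpowers w).prod (Subgroup.zpowers w))
      = orderOf w * orderOf w := by
    rw [Nat.card_congr (Subgroup.prodEquiv (Subgroup.zpowers w) (Subgroup.zpowers w)).toEquiv,
       Nat.card_prod, Nat.card_zpowers]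
  have h2e : p ^ (2 * e) ∣ ((⊤ : Subgroup G).lowerCentralSeries 1).index := by
    have h6 : p ^ (2 * e) ∣ Nat.card ↥((Subgroup.zpowers w).prod (Subgroup.zpowers w)) := by
      rw [hcardprod, two_mul, pow_add]
      exact mul_dvd_mul hew hew
    refine h6.trans ((Subgroup.card_dvd_of_le hR).trans ?_)
    have h7 : Nat.card ↥Φ.range = Φ.ker.index :=
      (Nat.card_congr (QuotientGroup.quotientKerEquivRange Φ).toEquiv).symm
    rw [h7]
    exact Subgroup.index_dvd_of_le hLker
  have h1e : p ^ (e * (l - 1)) ∣ Nat.card ↥((⊤ : Subgroup G).lowerCentralSeries 1) := by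
    have h8 := hD (l - 2) le_rfl
    rwa [show l - 1 - (l - 2) = 1 from by omega, show l - 2 + 1 = l - 1 from by omega] at h8
  have hfin : p ^ (e * (l - 1)) * p ^ (2 * e)
      ∣ Nat.card ↥((⊤ : Subgroup G).lowerCentralSeries 1) * ((⊤ : Subgroup G).lowerCentralSeries 1).index :=
    mul_dvd_mul h1e h2e
  rw [Subgroup.card_mul_index, hG, ← pow_add] at hfin
  have hle2 := (Nat.pow_dvd_pow_iff_le_right hp.one_lt).mp hfin
  have harith : e * (l - 1) + 2 * e = e * (l + 1) := by
    rw [mul_comm 2 e, ← Nat.mul_add, show l - 1 + 2 = l + 1 from by omega]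
  rw [harith] at hle2
  exact hle2
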